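/- With the notation above, the set of values of f on [0,1] is exactly the interval [0,1], i.e., f is a continuous surjection from [0,1] onto [0,1] with f(0)=0 and f(1)=1. -/

import Mathlib

open Finset

/-- g_{ik}: factors determined by the sequence (ε_k); indices 0-based. -/
noncomputable def gq (ε : ℕ → ℝ) (i : Fin 3) (k : ℕ) : ℝ :=
  if i = 1 then (1 - 2 * ε k) / 3 else (1 + ε k) / 3

/-- δ_{ik}: δ_{0k}=0, δ_{1k}=g_{0k}, δ_{2k}=g_{0k}+g_{1k}. -/
noncomputable def dq (ε : ℕ → ℝ) (i : Fin 3) (k : ℕ) : ℝ :=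
  if i = 0 then 0 else if i = 1 then gq ε 0 k else gq ε 0 k + gq ε 1 k

/-- F((α_k)) = δ_{α_1 1} + Σ_{k≥2} δ_{α_k k} Π_{j=1}^{k-1} g_{α_j j} (0-based indexing). -/
noncomputable def F (ε : ℕ → ℝ) (α : ℕ → Fin 3) : ℝ :=
  ∑' k : ℕ, dq ε (α k) k * ∏ j ∈ Finset.range k, gq ε (α j) j
/-- β_{ik}: β_{0k}=0, β_{1k}=q_{0k}, β_{2k}=q_{0k}+q_{1k}. -/
noncomputable def bq (q : Fin 3 → ℕ → ℝ) (i : Fin 3) (k : ℕ) : ℝ :=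
  if i = 0 then 0 else if i = 1 then q 0 k else q 0 k + q 1 k

/-- The number with Q*_3-digits (α_k): x = β_{α_1 1} + Σ_{k≥2} β_{α_k k} Π_{j=1}^{k-1} q_{α_j j}. -/
noncomputable def Xval (q : Fin 3 → ℕ → ℝ) (α : ℕ → Fin 3) : ℝ :=
  ∑' k : ℕ, bq q (α k) k * ∏ j ∈ Finset.range k, q (α j) j

namespace S8


def Hq (q : Fin 3 → ℕ → ℝ) : Prop := (∀ i k, 0 < q i k) ∧ ∀ k, q 0 k + q 1 k + q 2 k = 1
def He (ε : ℕ → ℝ) : Prop := ∀ k, 0 ≤ ε k ∧ ε k ≤ 1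

def shq (q : Fin 3 → ℕ → ℝ) : Fin 3 → ℕ → ℝ := fun i k => q i (k+1)
def she (ε : ℕ → ℝ) : ℕ → ℝ := fun k => ε (k+1)
def shs (β : ℕ → Fin 3) : ℕ → Fin 3 := fun k => β (k+1)

lemma trich (i : Fin 3) : i = 0 ∨ i = 1 ∨ i = 2 := by omega

lemma Hq_sh {q} (h : Hq q) : Hq (shq q) := ⟨fun i k => h.1 i (k+1), fun k => h.2 (k+1)⟩
lemma He_sh {ε} (h : He ε) : He (she ε) := fun k => h (k+1)

lemma q_lt_one {q} (h : Hq q) (i : Fin 3) (k : ℕ) : q i k < 1 := by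
  have h0 := h.1 0 k; have h1 := h.1 1 k; have h2 := h.1 2 k; have hs := h.2 k
  rcases trich i with hi|hi|hi <;> subst hi <;> linarith

lemma bq_nonneg {q} (h : Hq q) (i : Fin 3) (k : ℕ) : 0 ≤ bq q i k := by
  have h0 := h.1 0 k; have h1 := h.1 1 k
  rcases trich i with hi|hi|hi <;> subst hi <;> simp [bq] <;> linarith

lemma bq_le {q} (h : Hq q) (i : Fin 3) (k : ℕ) : bq q i k ≤ 1 - q i k := by
  have h0 := h.1 0 k; have h1 := h.1 1 k; have h2 := h.1 2 k; have hs := h.2 k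
  rcases trich i with hi|hi|hi <;> subst hi <;> simp [bq] <;> linarith

lemma prodq_pos {q} (h : Hq q) (β : ℕ → Fin 3) (n : ℕ) :
    0 < ∏ j ∈ Finset.range n, q (β j) j :=
  Finset.prod_pos fun j _ => h.1 (β j) j

lemma xterm_nonneg {q} (h : Hq q) (β : ℕ → Fin 3) (k : ℕ) :
    0 ≤ bq q (β k) k * ∏ j ∈ Finset.range k, q (β j) j :=
  mul_nonneg (bq_nonneg h _ _) (prodq_pos h β k).le

lemma xterm_le {q} (h : Hq q) (β : ℕ → Fin 3) (k : ℕ) :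
    bq q (β k) k * ∏ j ∈ Finset.range k, q (β j) j ≤
      (∏ j ∈ Finset.range k, q (β j) j) - ∏ j ∈ Finset.range (k+1), q (β j) j := by
  rw [Finset.prod_range_succ]
  have hb := bq_le h (β k) k
  have hp := (prodq_pos h β k).le
  nlinarith [prodq_pos h β k]

lemma xpartial_le {q} (h : Hq q) (β : ℕ → Fin 3) (n : ℕ) :
    ∑ k ∈ Finset.range n, bq q (β k) k * ∏ j ∈ Finset.range k, q (β j) j ≤ 1 := by
  calc ∑ k ∈ Finset.range n, bq q (β k) k * ∏ j ∈ Finset.range k, q (β j) j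
      ≤ ∑ k ∈ Finset.range n, ((∏ j ∈ Finset.range k, q (β j) j)
          - ∏ j ∈ Finset.range (k+1), q (β j) j) :=
        Finset.sum_le_sum fun k _ => xterm_le h β k
    _ = (∏ j ∈ Finset.range 0, q (β j) j) - ∏ j ∈ Finset.range n, q (β j) j :=
        Finset.sum_range_sub' _ n
    _ ≤ 1 := by simp; exact (prodq_pos h β n).le

lemma summableX {q} (h : Hq q) (β : ℕ → Fin 3) :
    Summable (fun k => bq q (β k) k * ∏ j ∈ Finset.range k, q (β j) j) :=
  summable_of_sum_range_le (fun k => xterm_nonneg h β k) (fun n => xpartial_le h β n)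

lemma Xval_nonneg {q} (h : Hq q) (β : ℕ → Fin 3) : 0 ≤ Xval q β :=
  tsum_nonneg (fun k => xterm_nonneg h β k)

lemma Xval_le_one {q} (h : Hq q) (β : ℕ → Fin 3) : Xval q β ≤ 1 :=
  Summable.tsum_le_of_sum_range_le (summableX h β) (fun n => xpartial_le h β n)

lemma bq_sh (q : Fin 3 → ℕ → ℝ) (i : Fin 3) (k : ℕ) : bq q i (k+1) = bq (shq q) i k := by
  simp [bq, shq]

lemma recX {q} (h : Hq q) (β : ℕ → Fin 3) :
    Xval q β = bq q (β 0) 0 + q (β 0) 0 * Xval (shq q) (shs β) := by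
  have hs := summableX h β
  rw [Xval, Summable.tsum_eq_zero_add hs]
  simp only [Finset.range_zero, Finset.prod_empty, mul_one]
  congr 1
  rw [Xval, ← tsum_mul_left]
  congr 1; funext k
  rw [Finset.prod_range_succ']
  rw [bq_sh]
  simp only [shq, shs]
  ring



lemma gq_abs {ε} (h : He ε) (i : Fin 3) (k : ℕ) : |gq ε i k| ≤ 2/3 := by
  have h0 := (h k).1; have h1 := (h k).2
  rcases trich i with hi|hi|hi <;> subst hi <;> simp [gq] <;> rw [abs_le] <;> constructor <;> linarith

lemma gq_pos_bounds {ε} (h : He ε) (i : Fin 3) (k : ℕ) (hi : i ≠ 1) :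
    1/3 ≤ gq ε i k ∧ gq ε i k ≤ 2/3 := by
  have h0 := (h k).1; have h1 := (h k).2
  rcases trich i with hi'|hi'|hi' <;> subst hi' <;> simp_all [gq] <;> constructor <;> linarith

lemma dq_bounds {ε} (h : He ε) (i : Fin 3) (k : ℕ) : 0 ≤ dq ε i k ∧ dq ε i k ≤ 2/3 := by
  have h0 := (h k).1; have h1 := (h k).2
  rcases trich i with hi|hi|hi <;> subst hi <;> simp [dq, gq] <;>
    first
      | (constructor <;> linarith)
      | norm_num
      | linarith

lemma dq_succ {ε} (i : Fin 3) (k : ℕ) (hi : i ≠ 2) : dq ε (i+1) k = dq ε i k + gq ε i k := by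
  rcases trich i with hi'|hi'|hi' <;> subst hi' <;> simp_all [dq, gq] <;> ring

lemma prodg_abs {ε} (h : He ε) (β : ℕ → Fin 3) (n : ℕ) :
    |∏ j ∈ Finset.range n, gq ε (β j) j| ≤ (2/3)^n := by
  rw [Finset.abs_prod]
  calc ∏ j ∈ Finset.range n, |gq ε (β j) j| ≤ ∏ j ∈ Finset.range n, (2/3 : ℝ) :=
        Finset.prod_le_prod (fun j _ => abs_nonneg _) (fun j _ => gq_abs h (β j) j)
    _ = (2/3)^n := by simp [div_pow]

lemma fterm_abs {ε} (h : He ε) (β : ℕ → Fin 3) (k : ℕ) :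
    |dq ε (β k) k * ∏ j ∈ Finset.range k, gq ε (β j) j| ≤ (2/3) * (2/3)^k := by
  rw [abs_mul]
  have hd := dq_bounds h (β k) k
  have hp := prodg_abs h β k
  have : |dq ε (β k) k| ≤ 2/3 := by rw [abs_of_nonneg hd.1]; exact hd.2
  have hpn : (0:ℝ) ≤ |∏ j ∈ Finset.range k, gq ε (β j) j| := abs_nonneg _
  nlinarith

lemma summableF {ε} (h : He ε) (β : ℕ → Fin 3) :
    Summable (fun k => dq ε (β k) k * ∏ j ∈ Finset.range k, gq ε (β j) j) := by
  apply Summable.of_abs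
  apply Summable.of_nonneg_of_le (fun k => abs_nonneg _) (fun k => fterm_abs h β k)
  exact (summable_geometric_of_lt_one (by norm_num) (by norm_num)).mul_left _

lemma F_abs_le {ε} (h : He ε) (β : ℕ → Fin 3) : |F ε β| ≤ 2 := by
  have hs := summableF h β
  have h1 : |F ε β| ≤ ∑' k : ℕ, |dq ε (β k) k * ∏ j ∈ Finset.range k, gq ε (β j) j| := by
    simpa only [F, Real.norm_eq_abs] using norm_tsum_le_tsum_norm (f := fun k => dq ε (β k) k * ∏ j ∈ Finset.range k, gq ε (β j) j) (by simpa only [Real.norm_eq_abs] using hs.abs)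
  have h2 : ∑' k : ℕ, |dq ε (β k) k * ∏ j ∈ Finset.range k, gq ε (β j) j|
      ≤ ∑' k : ℕ, (2/3) * (2/3:ℝ)^k := by
    apply Summable.tsum_le_tsum (fun k => fterm_abs h β k) hs.abs
    exact (summable_geometric_of_lt_one (by norm_num) (by norm_num)).mul_left _
  have h3 : ∑' k : ℕ, (2/3) * (2/3:ℝ)^k = 2 := by
    rw [tsum_mul_left, tsum_geometric_of_lt_one (by norm_num) (by norm_num)]; norm_num
  linarith

lemma gq_sh (ε : ℕ → ℝ) (i : Fin 3) (k : ℕ) : gq ε i (k+1) = gq (she ε) i k := by simp [gq, she]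
lemma dq_sh (ε : ℕ → ℝ) (i : Fin 3) (k : ℕ) : dq ε i (k+1) = dq (she ε) i k := by
  simp [dq, gq, she]

lemma recF {ε} (h : He ε) (β : ℕ → Fin 3) :
    F ε β = dq ε (β 0) 0 + gq ε (β 0) 0 * F (she ε) (shs β) := by
  have hs := summableF h β
  rw [F, Summable.tsum_eq_zero_add hs]
  simp only [Finset.range_zero, Finset.prod_empty, mul_one]
  congr 1
  rw [F, ← tsum_mul_left]
  congr 1; funext k
  rw [Finset.prod_range_succ', dq_sh]
  simp only [shs]
  have : ∀ j, gq ε (β (j+1)) (j+1) = gq (she ε) (β (j+1)) j := fun j => gq_sh ε _ j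
  rw [Finset.prod_congr rfl (fun j _ => this j)]
  ring

lemma F_bound (n : ℕ) : ∀ ε, He ε → ∀ β, -(2*(2/3:ℝ)^n) ≤ F ε β ∧ F ε β ≤ 1 + 2*(2/3)^n := by
  induction n with
  | zero =>
    intro ε h β
    have := F_abs_le h β
    rw [abs_le] at this
    constructor <;> [skip; skip] <;> simp <;> linarith [this.1, this.2]
  | succ n ih =>
    intro ε h β
    obtain ⟨hlo, hhi⟩ := ih (she ε) (He_sh h) (shs β)
    have h0 := (h 0).1; have h1 := (h 0).2
    have hpn : (0:ℝ) < (2/3:ℝ)^n := by positivity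
    rw [recF h β]
    rcases trich (β 0) with hb|hb|hb <;> rw [hb] <;> simp [dq, gq] <;>
      constructor <;> nlinarith [pow_succ (2/3:ℝ) n]

lemma F_nonneg {ε} (h : He ε) (β : ℕ → Fin 3) : 0 ≤ F ε β := by
  by_contra hc
  push_neg at hc
  obtain ⟨n, hn⟩ := exists_pow_lt_of_lt_one (show (0:ℝ) < -F ε β / 2 by linarith) (show (2/3:ℝ) < 1 by norm_num)
  have := (F_bound n ε h β).1
  nlinarith

lemma F_le_one {ε} (h : He ε) (β : ℕ → Fin 3) : F ε β ≤ 1 := by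
  by_contra hc
  push_neg at hc
  obtain ⟨n, hn⟩ := exists_pow_lt_of_lt_one (show (0:ℝ) < (F ε β - 1) / 2 by linarith) (show (2/3:ℝ) < 1 by norm_num)
  have := (F_bound n ε h β).2
  nlinarith


noncomputable def mq (q : Fin 3 → ℕ → ℝ) (k : ℕ) : ℝ := min (q 0 k) (min (q 1 k) (q 2 k))
noncomputable def del (q : Fin 3 → ℕ → ℝ) (n : ℕ) : ℝ := ∏ j ∈ Finset.range n, mq q j

lemma mq_pos {q} (h : Hq q) (k : ℕ) : 0 < mq q k := by
  have h0 := h.1 0 k; have h1 := h.1 1 k; have h2 := h.1 2 k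
  simp [mq]; exact ⟨h0, h1, h2⟩

lemma del_pos {q} (h : Hq q) (n : ℕ) : 0 < del q n :=
  Finset.prod_pos fun j _ => mq_pos h j

lemma mq_le_one {q} (h : Hq q) (k : ℕ) : mq q k ≤ 1 := by
  have := q_lt_one h 0 k
  have : mq q k ≤ q 0 k := by simp [mq]
  linarith [q_lt_one h 0 k]

lemma del_le_one {q} (h : Hq q) (n : ℕ) : del q n ≤ 1 :=
  Finset.prod_le_one (fun j _ => (mq_pos h j).le) (fun j _ => mq_le_one h j)

lemma mq_sh (q : Fin 3 → ℕ → ℝ) (k : ℕ) : mq q (k+1) = mq (shq q) k := by simp [mq, shq]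

lemma del_succ (q : Fin 3 → ℕ → ℝ) (n : ℕ) :
    del q (n+1) = mq q 0 * del (shq q) n := by
  rw [del, Finset.prod_range_succ']
  rw [Finset.prod_congr rfl (fun j _ => mq_sh q j)]
  rw [mul_comm]; rfl

lemma mq_le' {q} (h : Hq q) (i : Fin 3) (k : ℕ) : mq q k ≤ q i k := by
  rcases trich i with hi|hi|hi <;> subst hi <;> simp [mq]

lemma del_succ_le {q} (h : Hq q) (i : Fin 3) (n : ℕ) :
    del q (n+1) ≤ q i 0 * del (shq q) n := by
  rw [del_succ]
  exact mul_le_mul_of_nonneg_right (mq_le' h i 0) (del_pos (Hq_sh h) n).le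

lemma del_succ_le' {q} (h : Hq q) (i : Fin 3) (n : ℕ) : del q (n+1) ≤ q i 0 := by
  calc del q (n+1) ≤ q i 0 * del (shq q) n := del_succ_le h i n
    _ ≤ q i 0 * 1 := by
        exact mul_le_mul_of_nonneg_left (del_le_one (Hq_sh h) n) (h.1 i 0).le
    _ = q i 0 := mul_one _

lemma claimZ : ∀ n : ℕ, ∀ q, Hq q → ∀ ε, He ε → ∀ β,
    Xval q β < del q n → |F ε β| ≤ 2 * (2/3)^n := by
  intro n
  induction n with
  | zero => intro q hq ε hε β _; simpa using F_abs_le hε β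
  | succ n ih =>
    intro q hq ε hε β hx
    have hq' := Hq_sh hq
    have hX' := Xval_nonneg hq' (shs β)
    have hrec := recX hq β
    have hq00 := hq.1 (β 0) 0
    -- first digit must be 0
    have hb0 : β 0 = 0 := by
      by_contra hc
      have hbq : q 0 0 ≤ bq q (β 0) 0 := by
        have h10 := hq.1 1 0
        rcases trich (β 0) with h'|h'|h' <;> simp_all [bq] <;> linarith
      have : q 0 0 ≤ Xval q β := by nlinarith
      have := del_succ_le' hq 0 n
      linarith
    rw [hb0] at hrec
    norm_num [bq] at hrec
    -- hrec : Xval q β = 0 + q 0 0 * Xval (shq q) (shs β)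
    have h00 := hq.1 0 0
    have hXlt : Xval (shq q) (shs β) < del (shq q) n := by
      have hd := del_succ_le hq 0 n
      have : q 0 0 * Xval (shq q) (shs β) < q 0 0 * del (shq q) n := by
        nlinarith
      exact lt_of_mul_lt_mul_left this h00.le
    have hF' := ih (shq q) hq' (she ε) (He_sh hε) (shs β) hXlt
    rw [recF hε β, hb0]
    norm_num [dq]
    have hg := gq_abs hε 0 0
    have hF'n : (0:ℝ) ≤ |F (she ε) (shs β)| := abs_nonneg _
    calc |gq ε 0 0| * |F (she ε) (shs β)| ≤ (2/3) * (2 * (2/3)^n) := by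
          apply mul_le_mul hg hF' hF'n (by norm_num)
      _ = 2 * (2/3)^(n+1) := by ring

lemma claimO : ∀ n : ℕ, ∀ q, Hq q → ∀ ε, He ε → ∀ β,
    1 - Xval q β < del q n → |1 - F ε β| ≤ 3 * (2/3)^n := by
  intro n
  induction n with
  | zero =>
    intro q hq ε hε β _
    have := F_abs_le hε β
    rw [abs_le] at this ⊢
    simp only [pow_zero, mul_one]
    constructor <;> linarith [this.1, this.2]
  | succ n ih =>
    intro q hq ε hε β hx
    have hq' := Hq_sh hq
    have hX'le := Xval_le_one hq' (shs β)
    have hrec := recX hq β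
    have hq00 := hq.1 (β 0) 0
    have h20 := hq.1 2 0
    have hb0 : β 0 = 2 := by
      by_contra hc
      have hbq : bq q (β 0) 0 + q (β 0) 0 ≤ 1 - q 2 0 := by
        have h00 := hq.1 0 0; have h10 := hq.1 1 0; have hs0 := hq.2 0
        rcases trich (β 0) with h'|h'|h' <;> simp_all [bq] <;> linarith
      have hXle : Xval q β ≤ 1 - q 2 0 := by nlinarith
      have := del_succ_le' hq 2 n
      linarith
    rw [hb0] at hrec
    have hbq2 : bq q 2 0 = 1 - q 2 0 := by
      have hs0 := hq.2 0; simp [bq]; linarith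
    rw [hbq2] at hrec
    -- hrec : Xval q β = (1 - q 2 0) + q 2 0 * X'
    have hXgt : 1 - Xval (shq q) (shs β) < del (shq q) n := by
      have hd := del_succ_le hq 2 n
      have : q 2 0 * (1 - Xval (shq q) (shs β)) < q 2 0 * del (shq q) n := by nlinarith
      exact lt_of_mul_lt_mul_left this h20.le
    have hF' := ih (shq q) hq' (she ε) (He_sh hε) (shs β) hXgt
    rw [recF hε β, hb0]
    have hdq2 : dq ε 2 0 = 1 - gq ε 2 0 := by
      simp [dq, gq]; ring
    rw [hdq2]
    have key : 1 - ((1 - gq ε 2 0) + gq ε 2 0 * F (she ε) (shs β))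
        = gq ε 2 0 * (1 - F (she ε) (shs β)) := by ring
    rw [key, abs_mul]
    have hg := gq_abs hε 2 0
    calc |gq ε 2 0| * |1 - F (she ε) (shs β)| ≤ (2/3) * (3 * (2/3)^n) := by
          apply mul_le_mul hg hF' (abs_nonneg _) (by norm_num)
      _ = 3 * (2/3)^(n+1) := by ring

lemma claimM_adj {n : ℕ} {q} (hq : Hq q) {ε} (hε : He ε) (β γ : ℕ → Fin 3)
    (ihZ : ∀ q, Hq q → ∀ ε, He ε → ∀ β, Xval q β < del q n → |F ε β| ≤ 2 * (2/3)^n)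
    (ihO : ∀ q, Hq q → ∀ ε, He ε → ∀ β, 1 - Xval q β < del q n → |1 - F ε β| ≤ 3 * (2/3)^n)
    (i : Fin 3) (hi : i ≠ 2) (hbi : β 0 = i) (hgi : γ 0 = i + 1)
    (hx : |Xval q β - Xval q γ| < del q (n+1)) :
    |F ε β - F ε γ| ≤ 5 * (2/3)^(n+1) := by
  have hq' := Hq_sh hq
  have hrecb := recX hq β
  have hrecg := recX hq γ
  rw [hbi] at hrecb; rw [hgi] at hrecg
  have hXb' := Xval_le_one hq' (shs β)
  have hXb'0 := Xval_nonneg hq' (shs β)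
  have hXg'0 := Xval_nonneg hq' (shs γ)
  have hqi := hq.1 i 0
  have hqi1 := hq.1 (i+1) 0
  have hbq : bq q i 0 + q i 0 = bq q (i+1) 0 := by
    rcases trich i with h'|h'|h' <;> simp_all [bq]
  -- Xval β ≤ boundary ≤ Xval γ
  have h1 : Xval q β ≤ bq q (i+1) 0 := by nlinarith
  have h2 : bq q (i+1) 0 ≤ Xval q γ := by nlinarith
  have habs : |Xval q β - Xval q γ| = Xval q γ - Xval q β := by
    rw [abs_sub_comm, abs_of_nonneg]; linarith
  rw [habs] at hx
  -- 1 - X'β < del (shq q) n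
  have hOb : 1 - Xval (shq q) (shs β) < del (shq q) n := by
    have hd := del_succ_le hq i n
    have : q i 0 * (1 - Xval (shq q) (shs β)) < q i 0 * del (shq q) n := by nlinarith
    exact lt_of_mul_lt_mul_left this hqi.le
  have hZg : Xval (shq q) (shs γ) < del (shq q) n := by
    have hd := del_succ_le hq (i+1) n
    have : q (i+1) 0 * Xval (shq q) (shs γ) < q (i+1) 0 * del (shq q) n := by nlinarith
    exact lt_of_mul_lt_mul_left this hqi1.le
  have hFb := ihO (shq q) hq' (she ε) (He_sh hε) (shs β) hOb
  have hFg := ihZ (shq q) hq' (she ε) (He_sh hε) (shs γ) hZg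
  rw [recF hε β, recF hε γ, hbi, hgi, dq_succ i 0 hi]
  have key : dq ε i 0 + gq ε i 0 * F (she ε) (shs β)
      - (dq ε i 0 + gq ε i 0 + gq ε (i+1) 0 * F (she ε) (shs γ))
      = -(gq ε i 0 * (1 - F (she ε) (shs β))) - gq ε (i+1) 0 * F (she ε) (shs γ) := by ring
  rw [key]
  have hgb := gq_abs hε i 0
  have hgg := gq_abs hε (i+1) 0
  have e1 : |gq ε i 0 * (1 - F (she ε) (shs β))| ≤ (2/3) * (3 * (2/3)^n) := by
    rw [abs_mul]; exact mul_le_mul hgb hFb (abs_nonneg _) (by norm_num)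
  have e2 : |gq ε (i+1) 0 * F (she ε) (shs γ)| ≤ (2/3) * (2 * (2/3)^n) := by
    rw [abs_mul]; exact mul_le_mul hgg hFg (abs_nonneg _) (by norm_num)
  calc |(-(gq ε i 0 * (1 - F (she ε) (shs β)))) - gq ε (i+1) 0 * F (she ε) (shs γ)|
      ≤ |gq ε i 0 * (1 - F (she ε) (shs β))| + |gq ε (i+1) 0 * F (she ε) (shs γ)| := by
        rw [← abs_neg (gq ε i 0 * (1 - F (she ε) (shs β)))] at *
        exact abs_sub _ _
    _ ≤ (2/3) * (3 * (2/3)^n) + (2/3) * (2 * (2/3)^n) := by linarith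
    _ ≤ 5 * (2/3)^(n+1) := by rw [pow_succ]; ring_nf; linarith [pow_nonneg (show (0:ℝ) ≤ 2/3 by norm_num) n]

lemma claimM_far {n : ℕ} {q} (hq : Hq q) (β γ : ℕ → Fin 3)
    (hbi : β 0 = 0) (hgi : γ 0 = 2)
    (hx : |Xval q β - Xval q γ| < del q (n+1)) : False := by
  have hq' := Hq_sh hq
  have hrecb := recX hq β
  have hrecg := recX hq γ
  rw [hbi] at hrecb; rw [hgi] at hrecg
  have hXb' := Xval_le_one hq' (shs β)
  have hXg'0 := Xval_nonneg hq' (shs γ)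
  have h00 := hq.1 0 0; have h10 := hq.1 1 0; have h20 := hq.1 2 0
  have hb1 : Xval q β ≤ q 0 0 := by
    norm_num [bq] at hrecb; nlinarith
  have hb2 : q 0 0 + q 1 0 ≤ Xval q γ := by
    have : bq q 2 0 = q 0 0 + q 1 0 := by simp [bq]
    nlinarith [hq.1 2 0]
  have hd := del_succ_le' hq 1 n
  have : q 1 0 ≤ |Xval q β - Xval q γ| := by
    rw [abs_sub_comm, abs_of_nonneg (by linarith)]; linarith
  linarith

lemma claimM : ∀ n : ℕ, ∀ q, Hq q → ∀ ε, He ε → ∀ β γ,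
    |Xval q β - Xval q γ| < del q n → |F ε β - F ε γ| ≤ 5 * (2/3)^n := by
  intro n
  induction n with
  | zero =>
    intro q hq ε hε β γ _
    have h1 := F_abs_le hε β; have h2 := F_abs_le hε γ
    rw [abs_le] at h1 h2 ⊢
    simp only [pow_zero, mul_one]
    constructor <;> linarith [h1.1, h1.2, h2.1, h2.2]
  | succ n ih =>
    intro q hq ε hε β γ hx
    have hq' := Hq_sh hq
    -- same first digit case helper
    have same : β 0 = γ 0 → |F ε β - F ε γ| ≤ 5 * (2/3)^(n+1) := by
      intro hsame
      set i := β 0 with hi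
      have hrecb := recX hq β
      have hrecg := recX hq γ
      rw [← hi] at hrecb; rw [← hsame] at hrecg
      have hqi := hq.1 i 0
      have hXd : |Xval (shq q) (shs β) - Xval (shq q) (shs γ)| < del (shq q) n := by
        have hd := del_succ_le hq i n
        have heq : Xval q β - Xval q γ
            = q i 0 * (Xval (shq q) (shs β) - Xval (shq q) (shs γ)) := by
          rw [hrecb, hrecg]; ring
        rw [heq, abs_mul, abs_of_pos hqi] at hx
        have : q i 0 * |Xval (shq q) (shs β) - Xval (shq q) (shs γ)|
            < q i 0 * del (shq q) n := by linarith
        exact lt_of_mul_lt_mul_left this hqi.le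
      have hF' := ih (shq q) hq' (she ε) (He_sh hε) (shs β) (shs γ) hXd
      rw [recF hε β, recF hε γ, ← hi, ← hsame]
      have key : dq ε i 0 + gq ε i 0 * F (she ε) (shs β)
          - (dq ε i 0 + gq ε i 0 * F (she ε) (shs γ))
          = gq ε i 0 * (F (she ε) (shs β) - F (she ε) (shs γ)) := by ring
      rw [key, abs_mul]
      have hg := gq_abs hε i 0
      calc |gq ε i 0| * |F (she ε) (shs β) - F (she ε) (shs γ)|
          ≤ (2/3) * (5 * (2/3)^n) :=
            mul_le_mul hg hF' (abs_nonneg _) (by norm_num)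
        _ = 5 * (2/3)^(n+1) := by ring
    have ihZ := claimZ n
    have ihO := claimO n
    rcases trich (β 0) with hb|hb|hb <;> rcases trich (γ 0) with hg|hg|hg
    · exact same (by rw [hb, hg])
    · exact claimM_adj hq hε β γ ihZ ihO 0 (by decide) hb (by rw [hg]; rfl) hx
    · exact absurd (claimM_far hq β γ hb hg hx) id
    · rw [abs_sub_comm] at hx ⊢
      exact claimM_adj hq hε γ β ihZ ihO 0 (by decide) hg (by rw [hb]; rfl) hx
    · exact same (by rw [hb, hg])
    · exact claimM_adj hq hε β γ ihZ ihO 1 (by decide) hb (by rw [hg]; rfl) hx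
    · rw [abs_sub_comm] at hx ⊢
      exact absurd (claimM_far hq γ β hg hb hx) id
    · rw [abs_sub_comm] at hx ⊢
      exact claimM_adj hq hε γ β ihZ ihO 1 (by decide) hg (by rw [hb]; rfl) hx
    · exact same (by rw [hb, hg])

end S8

open S8

theorem stmt8 (q : Fin 3 → ℕ → ℝ) (hq : ∀ i k, 0 < q i k)
    (hsum : ∀ k, q 0 k + q 1 k + q 2 k = 1)
    (ε : ℕ → ℝ) (hε : ∀ k, 0 ≤ ε k ∧ ε k ≤ 1)
    (α : ℝ → ℕ → Fin 3) (hα : ∀ x ∈ Set.Icc (0 : ℝ) 1, Xval q (α x) = x) :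
    ContinuousOn (fun x => F ε (α x)) (Set.Icc (0 : ℝ) 1) ∧
    F ε (α 0) = 0 ∧ F ε (α 1) = 1 ∧
    (fun x => F ε (α x)) '' Set.Icc (0 : ℝ) 1 = Set.Icc (0 : ℝ) 1 := by
  have hQ : Hq q := ⟨hq, hsum⟩
  have hE : He ε := hε
  have hmem0 : (0:ℝ) ∈ Set.Icc (0:ℝ) 1 := by norm_num
  have hmem1 : (1:ℝ) ∈ Set.Icc (0:ℝ) 1 := by norm_num
  -- value at 0
  have hF0 : F ε (α 0) = 0 := by
    have hx0 : Xval q (α 0) = 0 := hα 0 hmem0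
    have hb : ∀ n : ℕ, |F ε (α 0)| ≤ 2 * (2/3)^n := by
      intro n
      exact claimZ n q hQ ε hE (α 0) (by rw [hx0]; exact del_pos hQ n)
    by_contra hc
    obtain ⟨n, hn⟩ := exists_pow_lt_of_lt_one
      (show (0:ℝ) < |F ε (α 0)| / 2 by positivity
        ) (show (2/3:ℝ) < 1 by norm_num)
    have := hb n
    nlinarith [abs_nonneg (F ε (α 0))]
  have hF1 : F ε (α 1) = 1 := by
    have hx1 : Xval q (α 1) = 1 := hα 1 hmem1
    have hb : ∀ n : ℕ, |1 - F ε (α 1)| ≤ 3 * (2/3)^n := by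
      intro n
      exact claimO n q hQ ε hE (α 1) (by rw [hx1]; simpa using del_pos hQ n)
    by_contra hc
    have hne : 1 - F ε (α 1) ≠ 0 := fun h => hc (by linarith [sub_eq_zero.mp h])
    obtain ⟨n, hn⟩ := exists_pow_lt_of_lt_one
      (show (0:ℝ) < |1 - F ε (α 1)| / 3 by positivity)
      (show (2/3:ℝ) < 1 by norm_num)
    have := hb n
    nlinarith [abs_nonneg (1 - F ε (α 1))]
  -- continuity
  have hcont : ContinuousOn (fun x => F ε (α x)) (Set.Icc (0 : ℝ) 1) := by
    intro x hx
    rw [Metric.continuousWithinAt_iff]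
    intro e he
    obtain ⟨n, hn⟩ := exists_pow_lt_of_lt_one
      (show (0:ℝ) < e / 5 by positivity) (show (2/3:ℝ) < 1 by norm_num)
    refine ⟨del q n, del_pos hQ n, fun y hy hd => ?_⟩
    have hxy : |Xval q (α y) - Xval q (α x)| < del q n := by
      rw [hα y hy, hα x hx]
      simpa [Real.dist_eq] using hd
    have := claimM n q hQ ε hE (α y) (α x) hxy
    calc dist (F ε (α y)) (F ε (α x)) = |F ε (α y) - F ε (α x)| := Real.dist_eq _ _
      _ ≤ 5 * (2/3)^n := this
      _ < e := by nlinarith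
  refine ⟨hcont, hF0, hF1, ?_⟩
  apply Set.Subset.antisymm
  · rintro y ⟨x, hx, rfl⟩
    exact ⟨F_nonneg hE (α x), F_le_one hE (α x)⟩
  · intro y hy
    have := intermediate_value_Icc (by norm_num : (0:ℝ) ≤ 1) hcont
    rw [hF0, hF1] at this
    exact this hy
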